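/- Fix n ≥ 1 and 0 ≤ m ≤ n. For every continuously differentiable path γ : [0,1] → ℝⁿ × ℝⁿ with γ(0) ∈ L₀ and γ(1) ∈ L₁, and every t ∈ [0,1], one has dist(γ(t), L₀ ∩ L₁) ≤ (1 + 1/√2)·ℓ(γ), where ℓ(γ) = ∫₀¹ ‖γ′(s)‖ ds. -/

import Mathlib

/-- ℝⁿ × ℝⁿ with the Euclidean (L²) norm. -/
noncomputable abbrev E2 (n : ℕ) :=
  WithLp 2 (EuclideanSpace ℝ (Fin n) × EuclideanSpace ℝ (Fin n))

/-- The Lagrangian subspace `L₀ = {(x, y) : x = 0}`. -/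
def L0 (n : ℕ) : Set (E2 n) :=
  {p | (WithLp.equiv 2 _ p).1 = 0}

/-- The Lagrangian subspace `L₁ = {(x, y) : xⱼ = 0 for 1 ≤ j ≤ m, yⱼ = 0 for m < j ≤ n}`. -/
def L1 (n m : ℕ) : Set (E2 n) :=
  {p | (∀ j : Fin n, (j : ℕ) < m → (WithLp.equiv 2 _ p).1 j = 0) ∧
       (∀ j : Fin n, m ≤ (j : ℕ) → (WithLp.equiv 2 _ p).2 j = 0)}

set_option synthInstance.maxHeartbeats 400000
set_option maxHeartbeats 4000000

lemma E2_equiv_sub {n : ℕ} (x y : E2 n) :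
    WithLp.equiv 2 _ (x - y) = WithLp.equiv 2 _ x - WithLp.equiv 2 _ y := rfl

section aux
variable {n m : ℕ}

/-- Length bound: the displacement of a C¹ path is at most the integral of the speed. -/
lemma seg_bound {γ γ' : ℝ → E2 n}
    (hderiv : ∀ t ∈ Set.Icc (0:ℝ) 1, HasDerivWithinAt γ (γ' t) (Set.Icc 0 1) t)
    (hcont : ContinuousOn γ' (Set.Icc 0 1))
    {a b : ℝ} (hab : a ≤ b) (ha : a ∈ Set.Icc (0:ℝ) 1) (hb : b ∈ Set.Icc (0:ℝ) 1) :
    ‖γ b - γ a‖ ≤ ∫ s in a..b, ‖γ' s‖ := by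
  have hsub : Set.Icc a b ⊆ Set.Icc (0:ℝ) 1 := Set.Icc_subset_Icc ha.1 hb.2
  have hint : IntervalIntegrable γ' MeasureTheory.volume a b := by
    apply ContinuousOn.intervalIntegrable
    rw [Set.uIcc_of_le hab]
    exact hcont.mono hsub
  have heq : ∫ s in a..b, γ' s = γ b - γ a := by
    apply intervalIntegral.integral_eq_sub_of_hasDeriv_right_of_le hab
    · exact fun x hx => ((hderiv x (hsub hx)).continuousWithinAt).mono hsub
    · intro x hx
      refine (hderiv x (hsub ⟨hx.1.le, hx.2.le⟩)).mono_of_mem_nhdsWithin ?_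
      refine Filter.mem_of_superset
        (Icc_mem_nhdsGT_of_mem ⟨le_refl x, lt_of_lt_of_le hx.2 hb.2⟩) ?_
      exact Set.Icc_subset_Icc (ha.1.trans hx.1.le) le_rfl
    · exact hint
  calc ‖γ b - γ a‖ = ‖∫ s in a..b, γ' s‖ := by rw [heq]
    _ ≤ ∫ s in a..b, ‖γ' s‖ := intervalIntegral.norm_integral_le_integral_norm hab

lemma E2_norm_sq (z : E2 n) :
    ‖z‖ ^ 2 = (∑ j : Fin n, ((WithLp.equiv 2 _ z).1 j) ^ 2)
      + ∑ j : Fin n, ((WithLp.equiv 2 _ z).2 j) ^ 2 := by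
  rw [WithLp.prod_norm_sq_eq_of_L2]
  have h1 : z.fst = (WithLp.equiv 2 _ z).1 := rfl
  have h2 : z.snd = (WithLp.equiv 2 _ z).2 := rfl
  rw [h1, h2, EuclideanSpace.norm_eq, EuclideanSpace.norm_eq,
    Real.sq_sqrt (by positivity), Real.sq_sqrt (by positivity)]
  simp [sq_abs]

/-- the truncation point: x = 0, y keeps coordinates < m -/
noncomputable def trunc (m : ℕ) (p : E2 n) : E2 n :=
  (WithLp.equiv 2 _).symm (0, (WithLp.equiv 2 _).symm
    (fun j : Fin n => if (j : ℕ) < m then (WithLp.equiv 2 _ p).2 j else 0))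

/-- the other projection point for elements of L1: x = 0, y kept -/
noncomputable def trunc1 (p : E2 n) : E2 n :=
  (WithLp.equiv 2 _).symm (0, (WithLp.equiv 2 _ p).2)

lemma trunc_mem (p : E2 n) : trunc m p ∈ L0 n ∩ L1 n m := by
  refine ⟨by simp [L0, trunc], ⟨fun j _ => by simp [trunc], fun j hj => ?_⟩⟩
  simp only [trunc, Equiv.apply_symm_apply, WithLp.equiv_apply, WithLp.equiv_symm_apply, WithLp.ofLp_toLp]
  rw [if_neg (by omega)]

lemma trunc1_mem (p : E2 n) (hp : p ∈ L1 n m) : trunc1 p ∈ L0 n ∩ L1 n m := by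
  refine ⟨by simp [L0, trunc1], ⟨fun j _ => by simp [trunc1], fun j hj => ?_⟩⟩
  simp only [trunc1, Equiv.apply_symm_apply]
  exact hp.2 j hj

lemma norm_sub_trunc (p : E2 n) (hp : p ∈ L0 n) :
    ‖p - trunc m p‖ ^ 2 =
      ∑ j : Fin n, (if (j:ℕ) < m then 0 else ((WithLp.equiv 2 _ p).2 j)^2) := by
  rw [E2_norm_sq]
  have h1 : (WithLp.equiv 2 _ (p - trunc m p)).1 = 0 := by
    rw [E2_equiv_sub]
    simp only [trunc, Equiv.apply_symm_apply, Prod.fst_sub]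
    rw [hp]; simp
  rw [h1]
  simp only [PiLp.zero_apply, ne_eq, OfNat.ofNat_ne_zero, not_false_eq_true, zero_pow,
    Finset.sum_const_zero, zero_add]
  apply Finset.sum_congr rfl
  intro j _
  rw [E2_equiv_sub]
  simp only [trunc, Equiv.apply_symm_apply, Prod.snd_sub, PiLp.sub_apply,
    WithLp.equiv_apply, WithLp.equiv_symm_apply, WithLp.ofLp_toLp]
  split <;> ring

lemma norm_sub_trunc1 (p : E2 n) (hp : p ∈ L1 n m) :
    ‖p - trunc1 p‖ ^ 2 =
      ∑ j : Fin n, (if (j:ℕ) < m then 0 else ((WithLp.equiv 2 _ p).1 j)^2) := by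
  rw [E2_norm_sq]
  have h2 : (WithLp.equiv 2 _ (p - trunc1 p)).2 = 0 := by
    rw [E2_equiv_sub]
    simp [trunc1]
  rw [h2]
  simp only [PiLp.zero_apply, ne_eq, OfNat.ofNat_ne_zero, not_false_eq_true, zero_pow,
    Finset.sum_const_zero, add_zero]
  apply Finset.sum_congr rfl
  intro j _
  rw [E2_equiv_sub]
  simp only [trunc1, Equiv.apply_symm_apply, Prod.fst_sub, PiLp.sub_apply, PiLp.zero_apply]
  split_ifs with h
  · rw [hp.1 j h]; ring
  · ring

/-- The √2-separation: the distances of the endpoints to the intersection satisfy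
a Pythagorean bound. -/
lemma key_sep (p q : E2 n) (hp : p ∈ L0 n) (hq : q ∈ L1 n m) :
    ‖p - trunc m p‖ ^ 2 + ‖q - trunc1 q‖ ^ 2 ≤ ‖p - q‖ ^ 2 := by
  rw [norm_sub_trunc p hp, norm_sub_trunc1 q hq, E2_norm_sq, ← Finset.sum_add_distrib,
    ← Finset.sum_add_distrib]
  apply Finset.sum_le_sum
  intro j _
  rw [E2_equiv_sub, Prod.fst_sub, Prod.snd_sub, PiLp.sub_apply, PiLp.sub_apply]
  have hpx : (WithLp.equiv 2 _ p).1 j = 0 := by rw [hp]; rfl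
  rw [hpx]
  split_ifs with h
  · simp only [zero_add]
    positivity
  · rw [hq.2 j (by omega)]
    ring_nf
    nlinarith [sq_nonneg ((WithLp.equiv 2 (EuclideanSpace ℝ (Fin n) × EuclideanSpace ℝ (Fin n)) q).1 j)]

end aux

/-- a C¹ path from `L₀` to `L₁` stays within distance
`(1 + 1/√2) · ℓ(γ)` of the intersection `L₀ ∩ L₁`. -/
theorem path_close_to_intersection (n m : ℕ) (hn : 1 ≤ n) (hm : m ≤ n)
    (γ γ' : ℝ → E2 n)
    (hderiv : ∀ t ∈ Set.Icc (0:ℝ) 1, HasDerivWithinAt γ (γ' t) (Set.Icc 0 1) t)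
    (hcont : ContinuousOn γ' (Set.Icc 0 1))
    (h0 : γ 0 ∈ L0 n) (h1 : γ 1 ∈ L1 n m)
    (t : ℝ) (ht : t ∈ Set.Icc (0:ℝ) 1) :
    Metric.infDist (γ t) (L0 n ∩ L1 n m) ≤
      (1 + 1 / Real.sqrt 2) * ∫ s in (0:ℝ)..1, ‖γ' s‖ := by
  obtain ⟨ht0, ht1⟩ := ht
  have h01 : (0:ℝ) ∈ Set.Icc (0:ℝ) 1 := by constructor <;> norm_num
  have h11 : (1:ℝ) ∈ Set.Icc (0:ℝ) 1 := by constructor <;> norm_num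
  set ℓ := ∫ s in (0:ℝ)..1, ‖γ' s‖ with hℓdef
  set d0 := ‖γ 0 - trunc m (γ 0)‖ with hd0def
  set d1 := ‖γ 1 - trunc1 (γ 1)‖ with hd1def
  set A := ∫ s in (0:ℝ)..t, ‖γ' s‖ with hAdef
  set B := ∫ s in t..1, ‖γ' s‖ with hBdef
  -- basic facts
  have hl0 : 0 ≤ ℓ :=
    intervalIntegral.integral_nonneg zero_le_one (fun x _ => norm_nonneg _)
  have hA : ‖γ t - γ 0‖ ≤ A := seg_bound hderiv hcont ht0 h01 ⟨ht0, ht1⟩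
  have hB : ‖γ 1 - γ t‖ ≤ B := seg_bound hderiv hcont ht1 ⟨ht0, ht1⟩ h11
  have hD : ‖γ 0 - γ 1‖ ≤ ℓ := by
    rw [norm_sub_rev]
    exact seg_bound hderiv hcont zero_le_one h01 h11
  have hintsub : ∀ a b : ℝ, a ∈ Set.Icc (0:ℝ) 1 → b ∈ Set.Icc (0:ℝ) 1 →
      IntervalIntegrable (fun s => ‖γ' s‖) MeasureTheory.volume a b := by
    intro a b ha hb
    apply ContinuousOn.intervalIntegrable
    exact (hcont.norm).mono (Set.uIcc_subset_Icc ha hb)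
  have hsplit : A + B = ℓ :=
    intervalIntegral.integral_add_adjacent_intervals
      (hintsub 0 t h01 ⟨ht0, ht1⟩) (hintsub t 1 ⟨ht0, ht1⟩ h11)
  -- the √2-separation
  have hkey : d0 ^ 2 + d1 ^ 2 ≤ ‖γ 0 - γ 1‖ ^ 2 := key_sep _ _ h0 h1
  have hs2 : Real.sqrt 2 * Real.sqrt 2 = 2 := Real.mul_self_sqrt (by norm_num)
  have hs2pos : (0:ℝ) < Real.sqrt 2 := Real.sqrt_pos.mpr (by norm_num)
  have hd01 : d0 + d1 ≤ Real.sqrt 2 * ℓ := by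
    have hD2 : ‖γ 0 - γ 1‖ ^ 2 ≤ ℓ ^ 2 := pow_le_pow_left₀ (norm_nonneg _) hD 2
    have h1' : (d0 + d1) ^ 2 ≤ (Real.sqrt 2 * ℓ) ^ 2 := by
      nlinarith [sq_nonneg (d0 - d1)]
    calc d0 + d1 = Real.sqrt ((d0 + d1) ^ 2) := (Real.sqrt_sq (by positivity)).symm
      _ ≤ Real.sqrt ((Real.sqrt 2 * ℓ) ^ 2) := Real.sqrt_le_sqrt h1'
      _ = Real.sqrt 2 * ℓ := Real.sqrt_sq (by positivity)
  -- two distance bounds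
  have e1 : Metric.infDist (γ t) (L0 n ∩ L1 n m) ≤ ‖γ t - γ 0‖ + d0 := by
    calc Metric.infDist (γ t) (L0 n ∩ L1 n m) ≤ dist (γ t) (trunc m (γ 0)) :=
          Metric.infDist_le_dist_of_mem (trunc_mem _)
      _ ≤ dist (γ t) (γ 0) + dist (γ 0) (trunc m (γ 0)) := dist_triangle _ _ _
      _ = ‖γ t - γ 0‖ + d0 := by rw [dist_eq_norm, dist_eq_norm]
  have e2 : Metric.infDist (γ t) (L0 n ∩ L1 n m) ≤ ‖γ 1 - γ t‖ + d1 := by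
    calc Metric.infDist (γ t) (L0 n ∩ L1 n m) ≤ dist (γ t) (trunc1 (γ 1)) :=
          Metric.infDist_le_dist_of_mem (trunc1_mem _ h1)
      _ ≤ dist (γ t) (γ 1) + dist (γ 1) (trunc1 (γ 1)) := dist_triangle _ _ _
      _ = ‖γ 1 - γ t‖ + d1 := by rw [dist_eq_norm, dist_eq_norm, norm_sub_rev (γ t)]
  -- combine
  have htwo : 2 * Metric.infDist (γ t) (L0 n ∩ L1 n m) ≤ ℓ + Real.sqrt 2 * ℓ := by
    have := add_le_add (e1.trans (add_le_add_left hA d0)) (e2.trans (add_le_add_left hB d1))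
    linarith
  have hinv : (1 / Real.sqrt 2) * Real.sqrt 2 = 1 := one_div_mul_cancel hs2pos.ne'
  nlinarith [mul_nonneg hl0 hs2pos.le, mul_nonneg (mul_nonneg hl0 hs2pos.le) hs2pos.le]
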